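/- arXiv:hep-th/9410020 — 5 statements merged into one kernel-verified Lean document; each statement's English description precedes it below -/
import Mathlib

section
/- If Q is a self-adjoint operator on a finite-dimensional complex inner product space anticommuting with a self-adjoint involution τ, then the supertrace of exp(-β·Q²) is independent of β > 0; more precisely, Tr(τ·exp(-β·Q²)) = Tr(τ restricted to ker Q) = dim(ker Q ∩ V₊) - dim(ker Q ∩ V₋) for all β > 0. -/
open Matrix NormedSpace

namespace WittenAux

variable {n : ℕ}

lemma trace_mulVecLin (M : Matrix (Fin n) (Fin n) ℂ) :
    LinearMap.trace ℂ (Fin n → ℂ) M.mulVecLin = M.trace := by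
  rw [LinearMap.trace_eq_matrix_trace ℂ (Pi.basisFun ℂ (Fin n)), LinearMap.toMatrix_eq_toMatrix']
  rw [show M.mulVecLin = Matrix.toLin' M from rfl, LinearMap.toMatrix'_toLin']

lemma matrix_eq_of_mulVec {A B : Matrix (Fin n) (Fin n) ℂ}
    (h : ∀ x, A *ᵥ x = B *ᵥ x) : A = B :=
  Matrix.toLin'.injective (LinearMap.ext h)

lemma herm_proj_ext {P P' : Matrix (Fin n) (Fin n) ℂ}
    (hP : Pᴴ = P) (hP' : P'ᴴ = P')
    (K : Set (Fin n → ℂ))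
    (hPm : ∀ x, P *ᵥ x ∈ K) (hPid : ∀ x ∈ K, P *ᵥ x = x)
    (hP'm : ∀ x, P' *ᵥ x ∈ K) (hP'id : ∀ x ∈ K, P' *ᵥ x = x) :
    P = P' := by
  have h1 : P' * P = P := matrix_eq_of_mulVec fun x => by
    rw [← Matrix.mulVec_mulVec]; exact hP'id _ (hPm x)
  have h2 : P * P' = P' := matrix_eq_of_mulVec fun x => by
    rw [← Matrix.mulVec_mulVec]; exact hPid _ (hP'm x)
  have h3 := congrArg Matrix.conjTranspose h1
  rw [Matrix.conjTranspose_mul, hP, hP'] at h3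
  exact h3.symm.trans h2

end WittenAux

set_option maxHeartbeats 1000000 in
/-- The supertrace `Tr(τ e^{-βQ²})` is independent of `β > 0` and equals
`dim(ker Q ∩ V₊) - dim(ker Q ∩ V₋)` (the Witten index). -/
theorem witten_index_supertrace {n : ℕ} (τ Q : Matrix (Fin n) (Fin n) ℂ)
    (hτsa : τ.IsHermitian) (hτinv : τ * τ = 1)
    (hQsa : Q.IsHermitian) (hanti : τ * Q + Q * τ = 0) :
    ∀ β : ℝ, 0 < β →
      (τ * NormedSpace.exp (-(β : ℂ) • (Q * Q))).trace =
        ((Module.finrank ℂ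
            ↥(LinearMap.ker Q.mulVecLin ⊓ Module.End.eigenspace τ.mulVecLin 1) : ℂ) -
         (Module.finrank ℂ
            ↥(LinearMap.ker Q.mulVecLin ⊓ Module.End.eigenspace τ.mulVecLin (-1)) : ℂ)) := by
  intro β hβ
  classical
  have hQτ : Q * τ = -(τ * Q) := eq_neg_of_add_eq_zero_right hanti
  -- spectral setup, with the spectral data made opaque
  obtain ⟨U, d, hU1, hU2, hQF0⟩ :
      ∃ (U : Matrix (Fin n) (Fin n) ℂ) (d : Fin n → ℝ), star U * U = 1 ∧ U * star U = 1 ∧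
        Q = U * Matrix.diagonal (fun i => ((d i : ℝ) : ℂ)) * star U :=
    ⟨↑hQsa.eigenvectorUnitary, hQsa.eigenvalues,
      Matrix.mem_unitaryGroup_iff'.mp hQsa.eigenvectorUnitary.2,
      Matrix.mem_unitaryGroup_iff.mp hQsa.eigenvectorUnitary.2,
      hQsa.spectral_theorem⟩
  set F : (ℝ → ℂ) → Matrix (Fin n) (Fin n) ℂ :=
    fun f => U * Matrix.diagonal (fun i => f (d i)) * star U with hFdef
  have hFmul : ∀ f g : ℝ → ℂ, F f * F g = F (fun x => f x * g x) := by
    intro f g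
    simp only [hFdef]
    calc U * Matrix.diagonal (fun i => f (d i)) * star U *
          (U * Matrix.diagonal (fun i => g (d i)) * star U)
        = U * (Matrix.diagonal (fun i => f (d i)) * ((star U * U) *
            Matrix.diagonal (fun i => g (d i)))) * star U := by noncomm_ring
      _ = U * Matrix.diagonal (fun i => f (d i) * g (d i)) * star U := by
          rw [hU1, one_mul, Matrix.diagonal_mul_diagonal]
  have hFsub : ∀ f g : ℝ → ℂ, F f - F g = F (fun x => f x - g x) := by
    intro f g
    simp only [hFdef, ← Matrix.diagonal_sub, ← Matrix.sub_mul, ← Matrix.mul_sub]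
  have hFsmul : ∀ (c : ℂ) (f : ℝ → ℂ), c • F f = F (fun x => c * f x) := by
    intro c f
    simp only [hFdef]
    rw [show (fun i => c * f (d i)) = c • (fun i => f (d i)) from rfl, Matrix.diagonal_smul,
      Matrix.mul_smul, Matrix.smul_mul]
  have hFone : F (fun _ => 1) = 1 := by
    simp only [hFdef, Matrix.diagonal_one, mul_one, hU2]
  have hFzero : F (fun _ => 0) = 0 := by
    simp only [hFdef, Matrix.diagonal_zero, mul_zero, zero_mul]
  have hQF : Q = F (fun x => (x : ℂ)) := hQF0
  -- the three spectral functions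
  set p : ℝ → ℂ := fun x => if x = 0 then 1 else 0 with hpdef
  set r : ℝ → ℂ := fun x => (x : ℂ)⁻¹ with hrdef
  set e : ℝ → ℂ := fun x => NormedSpace.exp (-(β : ℂ) * ((x : ℂ) * (x : ℂ))) with hedef
  set P := F p with hPdef
  set R := F r with hRdef
  have hUinv : U⁻¹ = star U := Matrix.inv_eq_right_inv hU2
  have hUunit : IsUnit U := ⟨⟨U, star U, hU2, hU1⟩, rfl⟩
  -- the exponential is F e
  have hE : NormedSpace.exp (-(β : ℂ) • (Q * Q)) = F e := by
    have h1 : -(β : ℂ) • (Q * Q)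
        = U * Matrix.diagonal (fun i => -(β : ℂ) * ((d i : ℂ) * (d i : ℂ))) * U⁻¹ := by
      rw [hQF, hFmul, hFsmul (-(β : ℂ)) (fun x => (x : ℂ) * (x : ℂ)), hUinv]
    rw [h1, Matrix.exp_conj U _ hUunit, hUinv, Matrix.exp_diagonal, Pi.exp_def]
  set E := F e with hEdef
  -- basic matrix identities
  have hQP : Q * P = 0 := by
    rw [hQF, hPdef, hFmul]
    have h : (fun x : ℝ => (x : ℂ) * p x) = (fun _ => (0 : ℂ)) :=
      funext fun x => by by_cases hx : x = 0 <;> simp [hpdef, hx]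
    rw [h, hFzero]
  have hRQ : R * Q = 1 - P := by
    rw [hRdef, hQF, hFmul]
    have h : (fun x : ℝ => r x * (x : ℂ)) = (fun x => (1 : ℂ) - p x) :=
      funext fun x => by
        by_cases hx : x = 0
        · simp [hrdef, hpdef, hx]
        · simp [hrdef, hpdef, hx, inv_mul_cancel₀, Complex.ofReal_ne_zero.mpr hx]
    rw [h, ← hFsub (fun _ => (1 : ℂ)) p, hFone]
  have hPone : P = 1 - R * Q := by rw [hRQ]; noncomm_ring
  have hPfix : ∀ x : Fin n → ℂ, Q *ᵥ x = 0 → P *ᵥ x = x := by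
    intro x hx
    rw [hPone, Matrix.sub_mulVec, Matrix.one_mulVec, ← Matrix.mulVec_mulVec, hx,
      Matrix.mulVec_zero, sub_zero]
  have hPherm : Pᴴ = P := by
    rw [hPdef]
    simp only [hFdef]
    rw [Matrix.conjTranspose_mul, Matrix.conjTranspose_mul, Matrix.diagonal_conjTranspose,
      Matrix.star_eq_conjTranspose, Matrix.conjTranspose_conjTranspose]
    have h : star (fun i => p (d i)) = (fun i => p (d i)) :=
      funext fun i => by by_cases hx : d i = 0 <;> simp [hpdef, hx, Pi.star_def]
    rw [h, Matrix.mul_assoc]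
  have hEP : E * P = P := by
    rw [hEdef, hPdef, hFmul]
    have h : (fun x : ℝ => e x * p x) = p :=
      funext fun x => by
        by_cases hx : x = 0
        · simp [hedef, hpdef, hx, NormedSpace.exp_zero]
        · simp [hpdef, hx]
    rw [h]
  -- τ commutes with P
  have hτPτ : P = τ * P * τ := by
    refine WittenAux.herm_proj_ext hPherm ?_ {x | Q *ᵥ x = 0} ?_ ?_ ?_ ?_
    · rw [Matrix.conjTranspose_mul, Matrix.conjTranspose_mul, hPherm, hτsa.eq]
      simp only [hPdef, hFdef]
      noncomm_ring
    · intro x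
      simp only [Set.mem_setOf_eq, Matrix.mulVec_mulVec, hQP, Matrix.zero_mulVec]
    · intro x hx; exact hPfix x hx
    · intro x
      have hmat : Q * (τ * P * τ) = 0 := by
        calc Q * (τ * P * τ) = (Q * τ) * P * τ := by noncomm_ring
          _ = -(τ * (Q * P) * τ) := by rw [hQτ]; noncomm_ring
          _ = 0 := by rw [hQP]; simp
      simp only [Set.mem_setOf_eq, Matrix.mulVec_mulVec, hmat, Matrix.zero_mulVec]
    · intro x hx
      simp only [Set.mem_setOf_eq] at hx
      have hτx : Q *ᵥ (τ *ᵥ x) = 0 := by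
        rw [Matrix.mulVec_mulVec, hQτ, Matrix.neg_mulVec, ← Matrix.mulVec_mulVec, hx,
          Matrix.mulVec_zero, neg_zero]
      rw [← Matrix.mulVec_mulVec, ← Matrix.mulVec_mulVec, hPfix _ hτx,
        Matrix.mulVec_mulVec, hτinv, Matrix.one_mulVec]
  have hτP : τ * P = P * τ := by
    have h := congrArg (· * τ) hτPτ
    rw [Matrix.mul_assoc (τ * P) τ τ, hτinv, mul_one] at h
    rw [← h, Matrix.mul_assoc]
  -- trace of the off-kernel part vanishes
  set B := E * R with hBdef
  have hQB : Q * B = E - P := by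
    rw [hBdef, hEdef, hRdef, hFmul e r, hQF, hFmul (fun x => (x : ℂ)) (fun x => e x * r x)]
    have h : (fun x : ℝ => (x : ℂ) * (e x * r x)) = (fun x => e x - p x) :=
      funext fun x => by
        by_cases hx : x = 0
        · simp [hedef, hrdef, hpdef, hx, NormedSpace.exp_zero]
        · have hx' : (x : ℂ) ≠ 0 := Complex.ofReal_ne_zero.mpr hx
          simp only [hrdef, hpdef, if_neg hx, sub_zero]
          field_simp
    rw [h, ← hFsub e p]
  have hBQ : B * Q = E - P := by
    rw [hBdef, hEdef, hRdef, hFmul e r, hQF, hFmul (fun x => e x * r x) (fun x => (x : ℂ))]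
    have h : (fun x : ℝ => (e x * r x) * (x : ℂ)) = (fun x => e x - p x) :=
      funext fun x => by
        by_cases hx : x = 0
        · simp [hedef, hrdef, hpdef, hx, NormedSpace.exp_zero]
        · have hx' : (x : ℂ) ≠ 0 := Complex.ofReal_ne_zero.mpr hx
          simp only [hrdef, hpdef, if_neg hx, sub_zero]
          field_simp
    rw [h, ← hFsub e p]
  have htr0 : (τ * (Q * B)).trace = 0 := by
    have key : (τ * (Q * B)).trace = -(τ * (Q * B)).trace := by
      calc (τ * (Q * B)).trace = (τ * (B * Q)).trace := by rw [hQB, ← hBQ]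
        _ = ((τ * B) * Q).trace := by rw [← Matrix.mul_assoc τ B Q]
        _ = (Q * (τ * B)).trace := Matrix.trace_mul_comm _ _
        _ = ((Q * τ) * B).trace := by rw [← Matrix.mul_assoc Q τ B]
        _ = (-(τ * Q) * B).trace := by rw [hQτ]
        _ = -(τ * (Q * B)).trace := by rw [Matrix.neg_mul, Matrix.trace_neg, Matrix.mul_assoc τ Q B]
    have h2 : (2 : ℂ) * (τ * (Q * B)).trace = 0 := by linear_combination key
    have := mul_eq_zero.mp h2
    simpa using this
  -- reduce to Tr(τ P)
  have hmain : (τ * NormedSpace.exp (-(β : ℂ) • (Q * Q))).trace = (τ * P).trace := by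
    have hsplit : τ * E = τ * P + τ * (Q * B) := by
      rw [hQB]
      rw [Matrix.mul_sub, ← hEP]
      noncomm_ring
    rw [hE, hsplit, Matrix.trace_add, htr0, add_zero]
  rw [hmain]
  -- the projections onto ker Q ∩ V±
  set Pip := (2⁻¹ : ℂ) • ((1 + τ) * P) with hPipdef
  set Pim := (2⁻¹ : ℂ) • ((1 - τ) * P) with hPimdef
  have hsplit2 : τ * P = Pip - Pim := by
    rw [hPipdef, hPimdef, ← smul_sub]
    have h : (1 + τ) * P - (1 - τ) * P = (2 : ℂ) • (τ * P) := by
      rw [two_smul]; noncomm_ring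
    rw [h, smul_smul]
    norm_num
  -- Pip is a projection onto ker Q ⊓ eigenspace 1
  have hprojp : LinearMap.IsProj
      (LinearMap.ker Q.mulVecLin ⊓ Module.End.eigenspace τ.mulVecLin 1) Pip.mulVecLin := by
    constructor
    · intro x
      refine Submodule.mem_inf.mpr ⟨?_, ?_⟩
      · have hmat : Q * Pip = 0 := by
          rw [hPipdef, mul_smul_comm]
          have h : Q * ((1 + τ) * P) = 0 := by
            calc Q * ((1 + τ) * P) = Q * P + (Q * τ) * P := by noncomm_ring
              _ = Q * P + -(τ * (Q * P)) := by rw [hQτ]; noncomm_ring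
              _ = 0 := by rw [hQP]; simp
          rw [h, smul_zero]
        refine LinearMap.mem_ker.mpr ?_
        show Q *ᵥ (Pip *ᵥ x) = 0
        rw [Matrix.mulVec_mulVec, hmat, Matrix.zero_mulVec]
      · have hmat : τ * Pip = Pip := by
          rw [hPipdef, mul_smul_comm]
          congr 1
          calc τ * ((1 + τ) * P) = (τ + τ * τ) * P := by noncomm_ring
            _ = (1 + τ) * P := by rw [hτinv, add_comm]
        refine Module.End.mem_eigenspace_iff.mpr ?_
        show τ *ᵥ (Pip *ᵥ x) = (1 : ℂ) • (Pip *ᵥ x)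
        rw [one_smul, Matrix.mulVec_mulVec, hmat]
    · rintro x ⟨hx1, hx2⟩
      have hQx : Q *ᵥ x = 0 := by simpa [Matrix.mulVecLin_apply] using hx1
      have hτx : τ *ᵥ x = x := by
        have := Module.End.mem_eigenspace_iff.mp hx2
        simpa [Matrix.mulVecLin_apply] using this
      simp only [Matrix.mulVecLin_apply, hPipdef, Matrix.smul_mulVec,
        ← Matrix.mulVec_mulVec, hPfix x hQx, Matrix.add_mulVec, Matrix.one_mulVec, hτx]
      rw [← two_smul ℂ x, smul_smul]
      norm_num
  -- Pim is a projection onto ker Q ⊓ eigenspace (-1)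
  have hprojm : LinearMap.IsProj
      (LinearMap.ker Q.mulVecLin ⊓ Module.End.eigenspace τ.mulVecLin (-1)) Pim.mulVecLin := by
    constructor
    · intro x
      refine Submodule.mem_inf.mpr ⟨?_, ?_⟩
      · have hmat : Q * Pim = 0 := by
          rw [hPimdef, mul_smul_comm]
          have h : Q * ((1 - τ) * P) = 0 := by
            calc Q * ((1 - τ) * P) = Q * P - (Q * τ) * P := by noncomm_ring
              _ = Q * P + τ * (Q * P) := by rw [hQτ]; noncomm_ring
              _ = 0 := by rw [hQP]; simp
          rw [h, smul_zero]
        refine LinearMap.mem_ker.mpr ?_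
        show Q *ᵥ (Pim *ᵥ x) = 0
        rw [Matrix.mulVec_mulVec, hmat, Matrix.zero_mulVec]
      · have hmat : τ * Pim = -Pim := by
          rw [hPimdef, mul_smul_comm, ← smul_neg]
          congr 1
          calc τ * ((1 - τ) * P) = (τ - τ * τ) * P := by noncomm_ring
            _ = -((1 - τ) * P) := by rw [hτinv]; noncomm_ring
        refine Module.End.mem_eigenspace_iff.mpr ?_
        show τ *ᵥ (Pim *ᵥ x) = (-1 : ℂ) • (Pim *ᵥ x)
        rw [neg_one_smul, Matrix.mulVec_mulVec, hmat, Matrix.neg_mulVec]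
    · rintro x ⟨hx1, hx2⟩
      have hQx : Q *ᵥ x = 0 := by simpa [Matrix.mulVecLin_apply] using hx1
      have hτx : τ *ᵥ x = -x := by
        have := Module.End.mem_eigenspace_iff.mp hx2
        simpa [Matrix.mulVecLin_apply] using this
      simp only [Matrix.mulVecLin_apply, hPimdef, Matrix.smul_mulVec,
        ← Matrix.mulVec_mulVec, hPfix x hQx, Matrix.sub_mulVec, Matrix.one_mulVec, hτx,
        sub_neg_eq_add]
      rw [← two_smul ℂ x, smul_smul]
      norm_num
  have htrp : Pip.trace = (Module.finrank ℂ
      ↥(LinearMap.ker Q.mulVecLin ⊓ Module.End.eigenspace τ.mulVecLin 1) : ℂ) := by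
    rw [← WittenAux.trace_mulVecLin, hprojp.trace]
  have htrm : Pim.trace = (Module.finrank ℂ
      ↥(LinearMap.ker Q.mulVecLin ⊓ Module.End.eigenspace τ.mulVecLin (-1)) : ℂ) := by
    rw [← WittenAux.trace_mulVecLin, hprojm.trace]
  rw [hsplit2, Matrix.trace_sub, htrp, htrm]
end

section
/- Witten index via supercharge block: if Q has block form with off-diagonal block q : V₊ → V₋ (i.e. Q(v₊,v₋) = (q* v₋, q v₊)), then Tr(τ exp(-β Q²)) = dim ker q - dim ker q* for all β > 0, i.e. the Witten index equals the Fredholm index of q. -/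
/-- Shortcut instance avoiding a typeclass-search blowup for the operator
algebra on a product of inner product spaces. -/
local instance t2CLM {E : Type*} [NormedAddCommGroup E] [NormedSpace ℂ E] :
    T2Space (E →L[ℂ] E) := inferInstance

local instance topologicalRingCLM {E : Type*} [NormedAddCommGroup E] [NormedSpace ℂ E] :
    IsTopologicalRing (E →L[ℂ] E) := inferInstance

lemma ker_adjoint_eq_orthogonal_range
    {Vp Vm : Type*}
    [NormedAddCommGroup Vp] [InnerProductSpace ℂ Vp] [FiniteDimensional ℂ Vp]
    [NormedAddCommGroup Vm] [InnerProductSpace ℂ Vm] [FiniteDimensional ℂ Vm]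
    (q : Vp →ₗ[ℂ] Vm) :
    LinearMap.ker (LinearMap.adjoint q) = (LinearMap.range q)ᗮ := by
  ext x
  rw [LinearMap.mem_ker, Submodule.mem_orthogonal]
  constructor
  · rintro h u ⟨y, rfl⟩
    rw [← LinearMap.adjoint_adjoint q, LinearMap.adjoint_inner_left, h, inner_zero_right]
  · intro h
    have h2 : (inner ℂ (LinearMap.adjoint q x) (LinearMap.adjoint q x) : ℂ) = 0 := by
      rw [LinearMap.adjoint_inner_left]
      exact inner_eq_zero_symm.mp (h _ ⟨LinearMap.adjoint q x, rfl⟩)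
    exact inner_self_eq_zero.mp h2

set_option maxHeartbeats 2000000 in
/-- Witten index via the supercharge block `q`: with `Q(v₊,v₋) = (q* v₋, q v₊)`
and `τ(v₊,v₋) = (v₊, -v₋)`, one has `Tr(τ e^{-βQ²}) = dim ker q - dim ker q*`
for every `β > 0` (the Witten index equals the Fredholm index of `q`). -/
theorem witten_index_eq_fredholm_index
    {Vp Vm : Type*}
    [NormedAddCommGroup Vp] [InnerProductSpace ℂ Vp] [FiniteDimensional ℂ Vp]
    [NormedAddCommGroup Vm] [InnerProductSpace ℂ Vm] [FiniteDimensional ℂ Vm]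
    (q : Vp →ₗ[ℂ] Vm)
    (Q τ : (Vp × Vm) →L[ℂ] (Vp × Vm))
    (hQ : ∀ v : Vp × Vm, Q v = (LinearMap.adjoint q v.2, q v.1))
    (hτ : ∀ v : Vp × Vm, τ v = (v.1, -v.2)) :
    ∀ β : ℝ, 0 < β →
      LinearMap.trace ℂ (Vp × Vm)
          ((τ.comp (NormedSpace.exp (-(β : ℂ) • (Q.comp Q)))) :
            (Vp × Vm) →ₗ[ℂ] (Vp × Vm)) =
        ((Module.finrank ℂ ↥(LinearMap.ker q) : ℂ) -
         (Module.finrank ℂ ↥(LinearMap.ker (LinearMap.adjoint q)) : ℂ)) := by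
  intro β hβ
  classical
  set S : (Vp × Vm) →L[ℂ] (Vp × Vm) := -(β : ℂ) • (Q.comp Q) with hS
  -- anticommutation τ Q = - Q τ
  have hanti : τ * Q = -(Q * τ) := by
    refine ContinuousLinearMap.ext fun v => ?_
    simp only [ContinuousLinearMap.mul_apply, ContinuousLinearMap.neg_apply, hQ, hτ]
    simp [Prod.ext_iff]
  -- trace functional X ↦ Tr(τ ∘ X)
  let F : ((Vp × Vm) →L[ℂ] (Vp × Vm)) →ₗ[ℂ] ℂ :=
    { toFun := fun X => LinearMap.trace ℂ (Vp × Vm)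
        ((τ.comp X : (Vp × Vm) →L[ℂ] (Vp × Vm)) : (Vp × Vm) →ₗ[ℂ] (Vp × Vm))
      map_add' := fun X Y => by
        show LinearMap.trace ℂ (Vp × Vm)
          ((τ.comp (X + Y) : (Vp × Vm) →L[ℂ] (Vp × Vm)) : (Vp × Vm) →ₗ[ℂ] (Vp × Vm)) = _
        rw [ContinuousLinearMap.comp_add, ContinuousLinearMap.coe_add, map_add]
      map_smul' := fun c X => by
        show LinearMap.trace ℂ (Vp × Vm)
          ((τ.comp (c • X) : (Vp × Vm) →L[ℂ] (Vp × Vm)) : (Vp × Vm) →ₗ[ℂ] (Vp × Vm)) = _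
        rw [ContinuousLinearMap.comp_smul, ContinuousLinearMap.coe_smul, map_smul]
        rfl }
  -- coercion commutes with multiplication and powers
  have hcoe_mul : ∀ f g : (Vp × Vm) →L[ℂ] (Vp × Vm),
      ((f * g : (Vp × Vm) →L[ℂ] (Vp × Vm)) : (Vp × Vm) →ₗ[ℂ] (Vp × Vm))
        = (f : (Vp × Vm) →ₗ[ℂ] (Vp × Vm)) * (g : (Vp × Vm) →ₗ[ℂ] (Vp × Vm)) := fun f g => rfl
  have hcoe_pow : ∀ (f : (Vp × Vm) →L[ℂ] (Vp × Vm)) (n : ℕ),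
      ((f ^ n : (Vp × Vm) →L[ℂ] (Vp × Vm)) : (Vp × Vm) →ₗ[ℂ] (Vp × Vm))
        = (f : (Vp × Vm) →ₗ[ℂ] (Vp × Vm)) ^ n := by
    intro f n
    induction n with
    | zero => rfl
    | succ n ih => rw [pow_succ, pow_succ, hcoe_mul, ih]
  -- key vanishing : Tr(τ Q^(2(m+1))) = 0
  have key : ∀ m : ℕ, F (Q ^ (2 * (m + 1))) = 0 := by
    intro m
    set t : (Vp × Vm) →ₗ[ℂ] (Vp × Vm) := (τ : (Vp × Vm) →ₗ[ℂ] (Vp × Vm)) with ht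
    set u : (Vp × Vm) →ₗ[ℂ] (Vp × Vm) := (Q : (Vp × Vm) →ₗ[ℂ] (Vp × Vm)) with hu
    have hanti' : t * u = -(u * t) := by
      have := congrArg (fun f : (Vp × Vm) →L[ℂ] (Vp × Vm) =>
        (f : (Vp × Vm) →ₗ[ℂ] (Vp × Vm))) hanti
      simpa [hcoe_mul] using this
    have hF : F (Q ^ (2 * (m + 1)))
        = LinearMap.trace ℂ (Vp × Vm) (t * u ^ (2 * (m + 1))) := by
      show LinearMap.trace ℂ (Vp × Vm)
        ((τ.comp (Q ^ (2 * (m + 1))) : (Vp × Vm) →L[ℂ] (Vp × Vm)) :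
          (Vp × Vm) →ₗ[ℂ] (Vp × Vm)) = _
      rw [show τ.comp (Q ^ (2 * (m + 1))) = τ * Q ^ (2 * (m + 1)) from rfl,
        hcoe_mul, hcoe_pow]
    rw [hF]
    have h2 : 2 * (m + 1) = 1 + (2 * m + 1) := by ring
    have hx : LinearMap.trace ℂ (Vp × Vm) (t * u ^ (2 * (m + 1)))
        = -LinearMap.trace ℂ (Vp × Vm) (t * u ^ (2 * (m + 1))) := by
      calc LinearMap.trace ℂ (Vp × Vm) (t * u ^ (2 * (m + 1)))
          = LinearMap.trace ℂ (Vp × Vm) ((t * u) * u ^ (2 * m + 1)) := by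
            rw [h2, pow_add, pow_one, mul_assoc]
        _ = LinearMap.trace ℂ (Vp × Vm) (u ^ (2 * m + 1) * (t * u)) :=
            LinearMap.trace_mul_comm ℂ _ _
        _ = -LinearMap.trace ℂ (Vp × Vm) (u ^ (2 * m + 1) * (u * t)) := by
            have e : u ^ (2 * m + 1) * (t * u) = -(u ^ (2 * m + 1) * (u * t)) := by
              rw [hanti']
              refine LinearMap.ext fun v => ?_
              simp [Module.End.mul_apply]
            rw [e, map_neg]
        _ = -LinearMap.trace ℂ (Vp × Vm) (u ^ (2 * (m + 1)) * t) := by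
            rw [← mul_assoc, ← pow_succ, show 2 * m + 1 + 1 = 2 * (m + 1) from by ring]
        _ = -LinearMap.trace ℂ (Vp × Vm) (t * u ^ (2 * (m + 1))) := by
            rw [LinearMap.trace_mul_comm]
    linear_combination (1 / 2 : ℂ) * hx
  -- expand the exponential through the trace functional
  have hsum := NormedSpace.expSeries_summable' (𝕂 := ℂ) S
  have hmap := (LinearMap.toContinuousLinearMap F).map_tsum (σ := RingHom.id ℂ) hsum
  simp only [LinearMap.coe_toContinuousLinearMap'] at hmap
  have hmain : F (NormedSpace.exp S) = F 1 := by
    rw [NormedSpace.exp_eq_tsum ℂ, hmap, tsum_eq_single 0 ?_]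
    · simp only [Nat.factorial_zero, Nat.cast_one, inv_one, pow_zero, one_smul]
    · intro n hn
      obtain ⟨m, rfl⟩ := Nat.exists_eq_succ_of_ne_zero hn
      have hSp : S ^ (m + 1) = (-(β : ℂ)) ^ (m + 1) • Q ^ (2 * (m + 1)) := by
        rw [hS, smul_pow, pow_mul, pow_two]
        rfl
      rw [map_smul, hSp, map_smul, key m, smul_zero, smul_zero]
  -- compute F 1 = Tr τ = dim Vp - dim Vm
  have hτLM : (τ : (Vp × Vm) →ₗ[ℂ] (Vp × Vm))
      = LinearMap.prodMap (LinearMap.id : Vp →ₗ[ℂ] Vp) (-(LinearMap.id : Vm →ₗ[ℂ] Vm)) := by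
    apply LinearMap.ext
    intro v
    simp [hτ, Prod.ext_iff]
  have hF1 : F 1 = (Module.finrank ℂ Vp : ℂ) - (Module.finrank ℂ Vm : ℂ) := by
    show LinearMap.trace ℂ (Vp × Vm)
      ((τ.comp (1 : (Vp × Vm) →L[ℂ] (Vp × Vm)) : (Vp × Vm) →L[ℂ] (Vp × Vm)) :
        (Vp × Vm) →ₗ[ℂ] (Vp × Vm)) = _
    rw [ContinuousLinearMap.one_def, ContinuousLinearMap.comp_id]
    rw [hτLM, LinearMap.trace_prodMap', LinearMap.trace_id, map_neg, LinearMap.trace_id]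
    ring
  -- final dimension count
  have h1 : (Module.finrank ℂ (LinearMap.range q) : ℂ)
      + (Module.finrank ℂ (LinearMap.ker q) : ℂ) = (Module.finrank ℂ Vp : ℂ) := by
    exact_mod_cast congrArg (Nat.cast : ℕ → ℂ) (LinearMap.finrank_range_add_finrank_ker q)
  have h3 : (Module.finrank ℂ (LinearMap.range q) : ℂ)
      + (Module.finrank ℂ ((LinearMap.range q)ᗮ) : ℂ) = (Module.finrank ℂ Vm : ℂ) := by
    exact_mod_cast congrArg (Nat.cast : ℕ → ℂ)
      (Submodule.finrank_add_finrank_orthogonal (LinearMap.range q))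
  calc LinearMap.trace ℂ (Vp × Vm)
        ((τ.comp (NormedSpace.exp S)) : (Vp × Vm) →ₗ[ℂ] (Vp × Vm))
      = F (NormedSpace.exp S) := rfl
    _ = F 1 := hmain
    _ = (Module.finrank ℂ Vp : ℂ) - (Module.finrank ℂ Vm : ℂ) := hF1
    _ = (Module.finrank ℂ (LinearMap.ker q) : ℂ)
        - (Module.finrank ℂ (LinearMap.ker (LinearMap.adjoint q)) : ℂ) := by
        rw [ker_adjoint_eq_orthogonal_range q]
        linear_combination h3 - h1
end

section
/- Superpartner Berry connection difference: let Q(t) be a differentiable family of self-adjoint operators anticommuting with a fixed self-adjoint involution τ, H(t) = Q(t)², and let φ₊(t) be a differentiable family of unit eigenvectors of H(t) with eigenvalue E(t) > 0 lying in the +1 eigenspace of τ. Define φ₋(t) = E(t)^{-1/2} · Q(t) φ₊(t). Then the diagonal Berry connection difference satisfies ⟨φ₊(t), φ₊'(t)⟩ - ⟨φ₋(t), φ₋'(t)⟩ = (1/(2E(t))) · ⟨φ₊(t), [Q'(t), Q(t)] φ₊(t)⟩. -/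
/-- Difference of the diagonal Berry connections of superpartners:
`⟨φ₊, φ₊'⟩ - ⟨φ₋, φ₋'⟩ = (1/2E) ⟨φ₊, [Q', Q] φ₊⟩`, where
`φ₋(t) = E(t)^{-1/2} Q(t) φ₊(t)`. -/
theorem superpartner_berry_connection_difference
    {V : Type*} [NormedAddCommGroup V] [InnerProductSpace ℂ V]
    [FiniteDimensional ℂ V]
    (τ : V →L[ℂ] V) (Q Q' : ℝ → V →L[ℂ] V)
    (E E' : ℝ → ℝ) (φp φp' φm' : ℝ → V)
    (hτinv : ∀ v : V, τ (τ v) = v)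
    (hτsa : ∀ v w : V, (inner ℂ (τ v) w : ℂ) = inner ℂ v (τ w))
    (hQsa : ∀ (t : ℝ) (v w : V), (inner ℂ (Q t v) w : ℂ) = inner ℂ v (Q t w))
    (hanti : ∀ (t : ℝ) (v : V), τ (Q t v) + Q t (τ v) = 0)
    (hQ : ∀ t : ℝ, HasDerivAt Q (Q' t) t)
    (hE : ∀ t : ℝ, HasDerivAt E (E' t) t)
    (hEpos : ∀ t : ℝ, 0 < E t)
    (hφp : ∀ t : ℝ, HasDerivAt φp (φp' t) t)
    (hφm : ∀ t : ℝ,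
      HasDerivAt (fun s => (Real.sqrt (E s))⁻¹ • Q s (φp s)) (φm' t) t)
    (hnorm : ∀ t : ℝ, ‖φp t‖ = 1)
    (hτφ : ∀ t : ℝ, τ (φp t) = φp t)
    (heig : ∀ t : ℝ, Q t (Q t (φp t)) = (E t : ℂ) • φp t) :
    ∀ t : ℝ,
      (inner ℂ (φp t) (φp' t) : ℂ) -
          (inner ℂ ((Real.sqrt (E t))⁻¹ • Q t (φp t)) (φm' t) : ℂ) =
        (1 / (2 * (E t : ℂ))) *
          inner ℂ (φp t) ((Q' t ∘L Q t - Q t ∘L Q' t) (φp t)) := by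
  intro t
  set r : ℝ := Real.sqrt (E t) with hr
  have hEt : 0 < E t := hEpos t
  have hrpos : 0 < r := Real.sqrt_pos.2 hEt
  have hrne : r ≠ 0 := ne_of_gt hrpos
  have hr2 : r ^ 2 = E t := Real.sq_sqrt hEt.le
  have hEne : (E t : ℂ) ≠ 0 := by exact_mod_cast ne_of_gt hEt
  have hrneC : (r : ℂ) ≠ 0 := by exact_mod_cast hrne
  -- derivative of ψ s = Q s (φp s)
  have hQr : ∀ u : ℝ, HasDerivAt (fun s => (Q s).restrictScalars ℝ) ((Q' u).restrictScalars ℝ) u :=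
    fun u => ((ContinuousLinearMap.restrictScalarsL ℂ V V ℝ ℝ).hasFDerivAt.comp_hasDerivAt u (hQ u))
  have hψ : HasDerivAt (fun s => Q s (φp s)) (Q' t (φp t) + Q t (φp' t)) t :=
    (hQr t).clm_apply (hφp t)
  -- derivative of (sqrt (E s))⁻¹
  have hsqrt : HasDerivAt (fun s => Real.sqrt (E s)) (E' t / (2 * r)) t :=
    (hE t).sqrt (ne_of_gt hEt)
  have hinv : HasDerivAt (fun s => (Real.sqrt (E s))⁻¹) (-(E' t / (2 * r)) / r ^ 2) t :=
    hsqrt.inv hrne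
  set α : ℝ := -(E' t / (2 * r)) / r ^ 2 with hα
  set ψ : V := Q t (φp t) with hψdef
  set ψ' : V := Q' t (φp t) + Q t (φp' t) with hψ'def
  have hD : HasDerivAt (fun s => (Real.sqrt (E s))⁻¹ • Q s (φp s)) (r⁻¹ • ψ' + α • ψ) t :=
    hinv.smul hψ
  have hφm'eq : φm' t = r⁻¹ • ψ' + α • ψ := (hφm t).unique hD
  -- Q' is self-adjoint
  have hQ'sa : ∀ v w : V, (inner ℂ (Q' t v) w : ℂ) = inner ℂ v (Q' t w) := by
    intro v w
    have h1 : HasDerivAt (fun s => (inner ℂ (Q s v) w : ℂ)) (inner ℂ (Q' t v) w) t := by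
      have := (((hQr t).clm_apply (hasDerivAt_const t v)).inner ℂ (hasDerivAt_const t w))
      simpa using this
    have h2 : HasDerivAt (fun s => (inner ℂ (Q s v) w : ℂ)) (inner ℂ v (Q' t w)) t := by
      have := ((hasDerivAt_const t v).inner ℂ ((hQr t).clm_apply (hasDerivAt_const t w)))
      have h2' : (fun s => (inner ℂ v (Q s w) : ℂ)) = fun s => (inner ℂ (Q s v) w : ℂ) := by
        funext s; rw [hQsa s v w]
      simpa [h2'] using this
    exact h1.unique h2
  -- ⟨φ,φ⟩ = 1 and its derivative
  have hip1 : ∀ s : ℝ, (inner ℂ (φp s) (φp s) : ℂ) = 1 := by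
    intro s
    rw [inner_self_eq_norm_sq_to_K, hnorm s]
    norm_num
  have hc0 : (inner ℂ (φp t) (φp' t) : ℂ) + inner ℂ (φp' t) (φp t) = 0 := by
    have h1 := (hφp t).inner ℂ (hφp t)
    have h2 : HasDerivAt (fun s => (inner ℂ (φp s) (φp s) : ℂ)) 0 t := by
      have : (fun s => (inner ℂ (φp s) (φp s) : ℂ)) = fun _ => 1 := funext hip1
      rw [this]; exact hasDerivAt_const t 1
    exact (h1.unique h2)
  -- ⟨ψ s, ψ s⟩ = E s
  have hipψ : ∀ s : ℝ, (inner ℂ (Q s (φp s)) (Q s (φp s)) : ℂ) = (E s : ℂ) := by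
    intro s
    rw [hQsa s, heig s, inner_smul_right, hip1 s, mul_one]
  have hEderiv : (inner ℂ ψ ψ' : ℂ) + inner ℂ ψ' ψ = (E' t : ℂ) := by
    have h1 := hψ.inner ℂ hψ
    have h2 : HasDerivAt (fun s => (inner ℂ (Q s (φp s)) (Q s (φp s)) : ℂ)) ((E' t : ℂ)) t := by
      have : (fun s => (inner ℂ (Q s (φp s)) (Q s (φp s)) : ℂ)) = fun s => ((E s : ℂ)) :=
        funext hipψ
      rw [this]; exact (hE t).ofReal_comp
    exact h1.unique h2
  -- abbreviations
  set a : ℂ := inner ℂ (φp t) (Q t (Q' t (φp t))) with ha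
  set b : ℂ := inner ℂ (φp t) (Q' t (Q t (φp t))) with hb
  set c : ℂ := inner ℂ (φp t) (φp' t) with hc
  -- expand inner ℂ products
  have e1 : (inner ℂ ψ (Q' t (φp t)) : ℂ) = a := hQsa t _ _
  have e2 : (inner ℂ ψ (Q t (φp' t)) : ℂ) = (E t : ℂ) * c := by
    rw [← hQsa t ψ (φp' t)]
    rw [hψdef, heig t, inner_smul_left, Complex.conj_ofReal]
  have e3 : (inner ℂ (Q' t (φp t)) ψ : ℂ) = b := by
    rw [hQ'sa]
  have e4 : (inner ℂ (Q t (φp' t)) ψ : ℂ) = (E t : ℂ) * inner ℂ (φp' t) (φp t) := by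
    rw [hψdef, hQsa t (φp' t), heig t, inner_smul_right]
  have hψψ' : (inner ℂ ψ ψ' : ℂ) = a + (E t : ℂ) * c := by
    rw [hψ'def, inner_add_right, e1, e2]
  have hψ'ψ : (inner ℂ ψ' ψ : ℂ) = b + (E t : ℂ) * inner ℂ (φp' t) (φp t) := by
    rw [hψ'def, inner_add_left, e3, e4]
  have hab : a + b = (E' t : ℂ) := by
    have := hEderiv
    rw [hψψ', hψ'ψ] at this
    have h0 : (E t : ℂ) * (c + inner ℂ (φp' t) (φp t)) = 0 := by
      rw [hc]; rw [hc0]; ring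
    linear_combination this - h0
  -- the left inner ℂ product
  have hsm : ∀ (x : ℝ) (v : V), x • v = (x : ℂ) • v := fun x v => by
    simp [Complex.coe_smul]
  have hipψψ : (inner ℂ ψ ψ : ℂ) = (E t : ℂ) := hipψ t
  have hL : (inner ℂ ((Real.sqrt (E t))⁻¹ • Q t (φp t)) (φm' t) : ℂ)
      = (r : ℂ)⁻¹ * ((r : ℂ)⁻¹ * (a + (E t : ℂ) * c) + (α : ℂ) * (E t : ℂ)) := by
    rw [hφm'eq, hsm r⁻¹, hsm r⁻¹, hsm α, inner_smul_left, inner_add_right,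
      inner_smul_right, inner_smul_right, hψψ', hipψψ, Complex.conj_ofReal]
    push_cast
    ring
  rw [hL]
  have hcomm : (inner ℂ (φp t) ((Q' t ∘L Q t - Q t ∘L Q' t) (φp t)) : ℂ) = b - a := by
    simp [inner_sub_right, hb, ha]
  rw [hcomm]
  -- final algebra
  have hr2C : (r : ℂ) ^ 2 = (E t : ℂ) := by exact_mod_cast hr2
  have hαC : (α : ℂ) = -((E' t : ℂ) / (2 * r)) / (r : ℂ) ^ 2 := by
    rw [hα]; push_cast; ring
  rw [hαC, ← hab, ← hr2C]
  field_simp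
  have h5 : (r : ℂ) ^ 5 * ((r : ℂ))⁻¹ ^ 5 = 1 := by
    rw [← mul_pow, mul_inv_cancel₀ hrneC, one_pow]
  linear_combination
end

section
/- If U₊, U₋ : ℝ → Matrix (Fin n) (Fin n) ℂ are differentiable solutions of U₊' = -(B₊ + iE)U₊ and U₋' = -(B₋ + iE)U₋ with U₊(0) = U₋(0) = I and each U₋(t) invertible, then the super-determinant D(t) = Det U₊(t) · (Det U₋(t))⁻¹ satisfies D'(t) = -D(t)·(Tr B₊(t) - Tr B₋(t)); in particular the dynamical phase E cancels. -/
attribute [local instance] Matrix.frobeniusNormedAddCommGroup Matrix.frobeniusNormedSpace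

open Matrix Finset

namespace SD

variable {n : ℕ}

/-- The entry map as a continuous linear map (Frobenius norm). -/
noncomputable def entryCLM (i j : Fin n) : Matrix (Fin n) (Fin n) ℂ →L[ℂ] ℂ :=
  LinearMap.toContinuousLinearMap
    ((LinearMap.proj j : (Fin n → ℂ) →ₗ[ℂ] ℂ).comp
      (LinearMap.proj i : Matrix (Fin n) (Fin n) ℂ →ₗ[ℂ] (Fin n → ℂ)))

lemma hasDerivAt_entry {U : ℝ → Matrix (Fin n) (Fin n) ℂ} {U' : Matrix (Fin n) (Fin n) ℂ}
    {t : ℝ} (h : HasDerivAt U U' t) (i j : Fin n) :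
    HasDerivAt (fun s => U s i j) (U' i j) t := by
  have := (((entryCLM i j).restrictScalars ℝ).hasFDerivAt.comp_hasDerivAt t h)
  exact this

/-- Jacobi's formula, unpolished form. -/
lemma hasDerivAt_det {U : ℝ → Matrix (Fin n) (Fin n) ℂ} {U' : Matrix (Fin n) (Fin n) ℂ}
    {t : ℝ} (h : HasDerivAt U U' t) :
    HasDerivAt (fun s => (U s).det)
      (∑ i, ((U t).updateCol i (fun k => U' k i)).det) t := by
  have hterm : ∀ σ : Equiv.Perm (Fin n),
      HasDerivAt (fun s => (Equiv.Perm.sign σ : ℂ) * ∏ i, U s (σ i) i)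
        ((Equiv.Perm.sign σ : ℂ) *
          ∑ i, (∏ j ∈ univ.erase i, U t (σ j) j) • U' (σ i) i) t := by
    intro σ
    exact (HasDerivAt.fun_finsetProd (u := univ) (f := fun i s => U s (σ i) i)
      (f' := fun i => U' (σ i) i) (fun i _ => hasDerivAt_entry h (σ i) i)).const_mul _
  have hsum := HasDerivAt.fun_sum (u := univ) fun σ _ => hterm σ
  have hfun : (fun s => ∑ σ : Equiv.Perm (Fin n),
      (Equiv.Perm.sign σ : ℂ) * ∏ i, U s (σ i) i) = fun s => (U s).det := by
    funext s; rw [Matrix.det_apply']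
  rw [hfun] at hsum
  convert hsum using 1
  · rfl
  simp only [Finset.mul_sum]
  rw [Finset.sum_comm]
  refine Finset.sum_congr rfl fun i _ => ?_
  rw [Matrix.det_apply']
  refine Finset.sum_congr rfl fun σ _ => ?_
  rw [smul_eq_mul, ← mul_assoc, mul_comm ((Equiv.Perm.sign σ : ℂ))
      ((∏ j ∈ univ.erase i, U t (σ j) j)), mul_assoc,
      mul_comm ((∏ j ∈ univ.erase i, U t (σ j) j)), mul_assoc]
  congr 1
  rw [← Finset.mul_prod_erase univ
      (fun j => ((U t).updateCol i (fun k => U' k i)) (σ j) j) (Finset.mem_univ i)]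
  simp only [Matrix.updateCol_apply, if_pos rfl]
  congr 1
  refine Finset.prod_congr rfl fun j hj => ?_
  rw [if_neg (Finset.mem_erase.mp hj).1]

/-- Jacobi: `∑ i det(U with col i replaced by col i of A*U) = det U * tr A`. -/
lemma jacobi (U A : Matrix (Fin n) (Fin n) ℂ) :
    ∑ i, (U.updateCol i (fun k => (A * U) k i)).det = U.det * A.trace := by
  have h1 : ∀ i : Fin n, (U.updateCol i (fun k => (A * U) k i)).det
      = (U.adjugate * (A * U)) i i := by
    intro i
    rw [← Matrix.cramer_apply, Matrix.cramer_eq_adjugate_mulVec]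
    simp [Matrix.mulVec, Matrix.mul_apply, dotProduct]
  simp only [h1]
  have : ∑ i, (U.adjugate * (A * U)) i i = Matrix.trace (U.adjugate * (A * U)) := rfl
  rw [this, ← Matrix.mul_assoc, Matrix.trace_mul_comm, ← Matrix.mul_assoc,
    Matrix.mul_adjugate, Matrix.smul_mul, Matrix.one_mul, Matrix.trace_smul]
  simp [mul_comm]

lemma hasDerivAt_det_ode (E : ℝ → Matrix (Fin n) (Fin n) ℂ)
    {U B : ℝ → Matrix (Fin n) (Fin n) ℂ} {t : ℝ}
    (h : HasDerivAt U (-(B t + Complex.I • E t) * U t) t) :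
    HasDerivAt (fun s => (U s).det)
      ((U t).det * (-(B t + Complex.I • E t)).trace) t := by
  have := hasDerivAt_det h
  rwa [jacobi (U t) (-(B t + Complex.I • E t))] at this

end SD

/-- The super-determinant `D(t) = Det U₊(t) · (Det U₋(t))⁻¹` of solutions of
`U±' = -(B± + iE)U±` satisfies `D' = -D·(Tr B₊ - Tr B₋)`: the dynamical phase
`E` cancels. -/
theorem superdeterminant_ode {n : ℕ}
    (Up Um Bp Bm E : ℝ → Matrix (Fin n) (Fin n) ℂ)
    (hBp : Continuous Bp) (hBm : Continuous Bm) (hE : Continuous E)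
    (hUp : ∀ t : ℝ, HasDerivAt Up (-(Bp t + Complex.I • E t) * Up t) t)
    (hUm : ∀ t : ℝ, HasDerivAt Um (-(Bm t + Complex.I • E t) * Um t) t)
    (hUp0 : Up 0 = 1) (hUm0 : Um 0 = 1)
    (hinv : ∀ t : ℝ, IsUnit (Um t)) :
    ∀ t : ℝ,
      HasDerivAt (fun s => (Up s).det * ((Um s).det)⁻¹)
        (-((Up t).det * ((Um t).det)⁻¹) * ((Bp t).trace - (Bm t).trace)) t := by
  intro t
  have hp := SD.hasDerivAt_det_ode E (hUp t)
  have hm := SD.hasDerivAt_det_ode E (hUm t)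
  have hne : (Um t).det ≠ 0 :=
    ((Matrix.isUnit_iff_isUnit_det _).mp (hinv t)).ne_zero
  have hmi := (hasDerivAt_inv hne).scomp t hm
  have h := hp.mul hmi
  convert h using 1
  · rfl
  · rfl
  simp only [Matrix.trace_neg, Matrix.trace_add, Matrix.trace_smul, smul_eq_mul, Function.comp_apply]
  field_simp
  ring
end

section
/- Adiabatic invariance of kernel dimensions (finite-dimensional version): let H(t), t ∈ [0,1], be a continuous family of positive semidefinite Hermitian matrices commuting with a fixed involution τ, such that the rank of H(t) is constant in t and dim ker H(0) ∩ V₊ ≠ dim ker H(0) ∩ V₋, and such that for every t the nonzero eigenvalues of H(t) restricted to V₊ coincide (with multiplicity) with those restricted to V₋. Then dim(ker H(t) ∩ V₊) = dim(ker H(0) ∩ V₊) and dim(ker H(t) ∩ V₋) = dim(ker H(0) ∩ V₋) for all t. -/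
open Module

open Module.End in
private lemma finrank_biSup_of_iSupIndep {K V : Type*} [Field K] [AddCommGroup V] [Module K V]
    [FiniteDimensional K V] {ι : Type*} [DecidableEq ι] {W : ι → Submodule K V}
    (h : iSupIndep W) (s : Finset ι) :
    finrank K ↥(⨆ i ∈ s, W i) = ∑ i ∈ s, finrank K ↥(W i) := by
  induction s using Finset.induction_on with
  | empty => simp
  | @insert a s ha ih =>
    rw [Finset.iSup_insert, Finset.sum_insert ha, ← ih]
    have hdisj : Disjoint (W a) (⨆ i ∈ s, W i) := by
      refine (h a).mono_right ?_
      exact iSup₂_le fun i hi => le_iSup₂ (f := fun j (_ : j ≠ a) => W j) i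
        (fun hia => ha (hia ▸ hi))
    have := Submodule.finrank_sup_add_finrank_inf_eq (W a) (⨆ i ∈ s, W i)
    rw [hdisj.eq_bot, finrank_bot] at this
    omega

open Module.End in
private lemma eigenspace_involution_bot {V : Type*} [NormedAddCommGroup V]
    [InnerProductSpace ℂ V] {B : V →ₗ[ℂ] V} (hBinv : ∀ v, B (B v) = v)
    {γ : ℂ} (h1 : γ ≠ 1) (h2 : γ ≠ -1) : eigenspace B γ = ⊥ := by
  rw [eq_bot_iff]
  intro v hv
  have hv' : B v = γ • v := mem_eigenspace_iff.mp hv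
  have h : v = (γ * γ) • v := by
    conv_lhs => rw [← hBinv v, hv', map_smul, hv', smul_smul]
  have h' : (γ * γ - 1) • v = 0 := by
    rw [sub_smul, one_smul, ← h, sub_self]
  have hγ : γ * γ - 1 ≠ 0 := by
    intro hc
    have : (γ - 1) * (γ + 1) = 0 := by ring_nf; linear_combination hc
    rcases mul_eq_zero.mp this with h | h
    · exact h1 (by linear_combination h)
    · exact h2 (by linear_combination h)
  have := (smul_eq_zero.mp h').resolve_left hγ
  simpa using this

open Module.End in
/-- Sum of the two graded kernel dimensions equals the full kernel dimension. -/
private lemma kernel_dim_sum_aux {V : Type*} [NormedAddCommGroup V] [InnerProductSpace ℂ V]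
    [FiniteDimensional ℂ V] {A B : V →ₗ[ℂ] V}
    (hB : B.IsSymmetric) (hBinv : ∀ v, B (B v) = v) (hAB : Commute A B) :
    finrank ℂ ↥(LinearMap.ker A ⊓ eigenspace B 1) +
      finrank ℂ ↥(LinearMap.ker A ⊓ eigenspace B (-1)) = finrank ℂ ↥(LinearMap.ker A) := by
  classical
  have hsup : (⨆ γ : ℂ, eigenspace A 0 ⊓ eigenspace B γ) = eigenspace A 0 :=
    LinearMap.IsSymmetric.iSup_eigenspace_inf_eigenspace_of_commute hB hAB
  have hindep : iSupIndep (fun γ : ℂ => eigenspace A 0 ⊓ eigenspace B γ) :=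
    (eigenspaces_iSupIndep B).mono fun γ => inf_le_right
  have hbi : (⨆ γ ∈ ({1, -1} : Finset ℂ), eigenspace A 0 ⊓ eigenspace B γ) =
      ⨆ γ : ℂ, eigenspace A 0 ⊓ eigenspace B γ := by
    refine le_antisymm (iSup₂_le fun γ _ =>
      le_iSup (fun γ : ℂ => eigenspace A 0 ⊓ eigenspace B γ) γ) (iSup_le fun γ => ?_)
    by_cases hγ : γ ∈ ({1, -1} : Finset ℂ)
    · exact le_iSup₂ (f := fun γ (_ : γ ∈ ({1, -1} : Finset ℂ)) =>
        eigenspace A 0 ⊓ eigenspace B γ) γ hγ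
    · simp only [Finset.mem_insert, Finset.mem_singleton, not_or] at hγ
      rw [eigenspace_involution_bot hBinv hγ.1 hγ.2, inf_bot_eq]
      exact bot_le
  have h1 : (1 : ℂ) ∉ ({-1} : Finset ℂ) := by
    simp only [Finset.mem_singleton]
    norm_num
  have := finrank_biSup_of_iSupIndep hindep ({1, -1} : Finset ℂ)
  rw [hbi, hsup, Finset.sum_insert h1, Finset.sum_singleton, eigenspace_zero] at this
  omega

open Module.End in
/-- Difference of the two graded kernel dimensions equals the signature. -/
private lemma kernel_dim_diff_aux {V : Type*} [NormedAddCommGroup V] [InnerProductSpace ℂ V]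
    [FiniteDimensional ℂ V] {A B : V →ₗ[ℂ] V}
    (hA : A.IsSymmetric) (hAB : Commute A B)
    (hspec : ∀ μ : ℂ, μ ≠ 0 →
      finrank ℂ ↥(eigenspace A μ ⊓ eigenspace B 1) =
        finrank ℂ ↥(eigenspace A μ ⊓ eigenspace B (-1))) :
    (finrank ℂ ↥(LinearMap.ker A ⊓ eigenspace B 1) : ℤ) -
      finrank ℂ ↥(LinearMap.ker A ⊓ eigenspace B (-1)) =
      (finrank ℂ ↥(eigenspace B 1) : ℤ) - finrank ℂ ↥(eigenspace B (-1)) := by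
  classical
  have hfin : {γ : ℂ | eigenspace A γ ≠ ⊥}.Finite := by
    haveI : Finite {γ : ℂ // eigenspace A γ ≠ ⊥} :=
      @Finite.of_fintype _ ((eigenspaces_iSupIndep A).fintypeNeBotOfFiniteDimensional)
    exact Set.finite_coe_iff.mp this
  set s : Finset ℂ := insert 0 hfin.toFinset with hs
  have hcount : ∀ c : ℂ, finrank ℂ ↥(eigenspace B c) =
      ∑ γ ∈ s, finrank ℂ ↥(eigenspace B c ⊓ eigenspace A γ) := by
    intro c
    have hsup : (⨆ γ : ℂ, eigenspace B c ⊓ eigenspace A γ) = eigenspace B c :=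
      LinearMap.IsSymmetric.iSup_eigenspace_inf_eigenspace_of_commute hA hAB.symm
    have hindep : iSupIndep (fun γ : ℂ => eigenspace B c ⊓ eigenspace A γ) :=
      (eigenspaces_iSupIndep A).mono fun γ => inf_le_right
    have hbi : (⨆ γ ∈ s, eigenspace B c ⊓ eigenspace A γ) =
        ⨆ γ : ℂ, eigenspace B c ⊓ eigenspace A γ := by
      refine le_antisymm (iSup₂_le fun γ _ =>
        le_iSup (fun γ : ℂ => eigenspace B c ⊓ eigenspace A γ) γ) (iSup_le fun γ => ?_)
      by_cases hγ : γ ∈ s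
      · exact le_iSup₂ (f := fun γ (_ : γ ∈ s) => eigenspace B c ⊓ eigenspace A γ) γ hγ
      · have : eigenspace A γ = ⊥ := by
          by_contra hne
          exact hγ (by simp [hs, Set.Finite.mem_toFinset, hne])
        rw [this, inf_bot_eq]
        exact bot_le
    have := finrank_biSup_of_iSupIndep hindep s
    rw [hbi, hsup] at this
    exact this
  rw [hcount 1, hcount (-1)]
  push_cast
  rw [← Finset.sum_sub_distrib]
  rw [Finset.sum_eq_single_of_mem 0 (by simp [hs])]
  · rw [eigenspace_zero, inf_comm (eigenspace B 1) _, inf_comm (eigenspace B (-1)) _]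
  · intro γ _ hγ
    rw [inf_comm (eigenspace B 1) _, inf_comm (eigenspace B (-1)) _, hspec γ hγ, sub_self]

/-- Adiabatic invariance of the kernel dimensions: for a continuous family of
positive semidefinite Hermitian operators `H(t)` commuting with an involution
`τ`, with constant kernel dimension, supersymmetric pairing of nonzero
eigenvalues, and `dim(ker H(0) ∩ V₊) ≠ dim(ker H(0) ∩ V₋)`, the bosonic and
fermionic kernel dimensions are constant in `t ∈ [0,1]`. -/
theorem adiabatic_invariance_of_kernel_dims
    {V : Type*} [NormedAddCommGroup V] [InnerProductSpace ℂ V]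
    [FiniteDimensional ℂ V]
    (τ : V →L[ℂ] V) (H : ℝ → V →L[ℂ] V)
    (hτinv : ∀ v : V, τ (τ v) = v)
    (hτsa : ∀ v w : V, (inner ℂ (τ v) w : ℂ) = inner ℂ v (τ w))
    (hH : ContinuousOn H (Set.Icc (0 : ℝ) 1))
    (hsa : ∀ t ∈ Set.Icc (0 : ℝ) 1, ∀ v w : V,
      (inner ℂ (H t v) w : ℂ) = inner ℂ v (H t w))
    (hpos : ∀ t ∈ Set.Icc (0 : ℝ) 1, ∀ v : V, 0 ≤ (inner ℂ v (H t v) : ℂ).re)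
    (hcomm : ∀ t ∈ Set.Icc (0 : ℝ) 1, ∀ v : V, H t (τ v) = τ (H t v))
    (hrank : ∀ t ∈ Set.Icc (0 : ℝ) 1,
      finrank ℂ ↥(LinearMap.ker ((H t : V →ₗ[ℂ] V))) =
        finrank ℂ ↥(LinearMap.ker ((H 0 : V →ₗ[ℂ] V))))
    (hspec : ∀ t ∈ Set.Icc (0 : ℝ) 1, ∀ μ : ℂ, μ ≠ 0 →
      finrank ℂ ↥(Module.End.eigenspace ((H t : V →ₗ[ℂ] V)) μ ⊓
          Module.End.eigenspace ((τ : V →ₗ[ℂ] V)) 1) =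
        finrank ℂ ↥(Module.End.eigenspace ((H t : V →ₗ[ℂ] V)) μ ⊓
          Module.End.eigenspace ((τ : V →ₗ[ℂ] V)) (-1)))
    (hne : finrank ℂ ↥(LinearMap.ker ((H 0 : V →ₗ[ℂ] V)) ⊓
          Module.End.eigenspace ((τ : V →ₗ[ℂ] V)) 1) ≠
        finrank ℂ ↥(LinearMap.ker ((H 0 : V →ₗ[ℂ] V)) ⊓
          Module.End.eigenspace ((τ : V →ₗ[ℂ] V)) (-1))) :
    ∀ t ∈ Set.Icc (0 : ℝ) 1,
      finrank ℂ ↥(LinearMap.ker ((H t : V →ₗ[ℂ] V)) ⊓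
          Module.End.eigenspace ((τ : V →ₗ[ℂ] V)) 1) =
        finrank ℂ ↥(LinearMap.ker ((H 0 : V →ₗ[ℂ] V)) ⊓
          Module.End.eigenspace ((τ : V →ₗ[ℂ] V)) 1) ∧
      finrank ℂ ↥(LinearMap.ker ((H t : V →ₗ[ℂ] V)) ⊓
          Module.End.eigenspace ((τ : V →ₗ[ℂ] V)) (-1)) =
        finrank ℂ ↥(LinearMap.ker ((H 0 : V →ₗ[ℂ] V)) ⊓
          Module.End.eigenspace ((τ : V →ₗ[ℂ] V)) (-1)) := by
  intro t ht
  have h0 : (0 : ℝ) ∈ Set.Icc (0 : ℝ) 1 := by constructor <;> norm_num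
  set B : V →ₗ[ℂ] V := (τ : V →ₗ[ℂ] V) with hB
  have hBsym : B.IsSymmetric := fun v w => hτsa v w
  have hBinv : ∀ v, B (B v) = v := fun v => hτinv v
  have key : ∀ u ∈ Set.Icc (0 : ℝ) 1,
      (finrank ℂ ↥(LinearMap.ker ((H u : V →ₗ[ℂ] V)) ⊓ Module.End.eigenspace B 1) : ℤ) -
        finrank ℂ ↥(LinearMap.ker ((H u : V →ₗ[ℂ] V)) ⊓ Module.End.eigenspace B (-1)) =
        (finrank ℂ ↥(Module.End.eigenspace B 1) : ℤ) -
          finrank ℂ ↥(Module.End.eigenspace B (-1)) := by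
    intro u hu
    have hAsym : ((H u : V →ₗ[ℂ] V)).IsSymmetric := fun v w => hsa u hu v w
    have hAB : Commute ((H u : V →ₗ[ℂ] V)) B := by
      ext v
      simpa [Module.End.mul_apply, hB] using hcomm u hu v
    exact kernel_dim_diff_aux hAsym hAB (hspec u hu)
  have keysum : ∀ u ∈ Set.Icc (0 : ℝ) 1,
      finrank ℂ ↥(LinearMap.ker ((H u : V →ₗ[ℂ] V)) ⊓ Module.End.eigenspace B 1) +
        finrank ℂ ↥(LinearMap.ker ((H u : V →ₗ[ℂ] V)) ⊓ Module.End.eigenspace B (-1)) =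
        finrank ℂ ↥(LinearMap.ker ((H u : V →ₗ[ℂ] V))) := by
    intro u hu
    have hAB : Commute ((H u : V →ₗ[ℂ] V)) B := by
      ext v
      simpa [Module.End.mul_apply, hB] using hcomm u hu v
    exact kernel_dim_sum_aux hBsym hBinv hAB
  have h1 := key t ht
  have h2 := key 0 h0
  have h3 := keysum t ht
  have h4 := keysum 0 h0
  have h5 := hrank t ht
  constructor <;> omega
end
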